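/- Let P_k = (1, ω^k, ..., ω^{(N-1)k}) with ω = e^{2πi/N} be the regular (possibly star) N-gon, let l = |ω^k - 1| be its edge length, λ_k = -4 sin²(πk/N), and β > 0. Then P(t) = a(t) P_k with a(t) = (1 - β l^β λ_k t)^{-1/β} is a solution of the β-polygon flow, i.e., dP_j/dt = |P_{j+1}-P_j|^β (P_{j+1}-P_j) + |P_{j-1}-P_j|^β (P_{j-1}-P_j) for all j and all t ≥ 0. -/

import Mathlib

/-- The right-hand side of the β-polygon flow:
`(M_X X)_j = l_j^β (X_{j+1} - X_j) + l_{j-1}^β (X_{j-1} - X_j)` with `l_j = ‖X_{j+1} - X_j‖`. -/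
noncomputable def flowRHS {N : ℕ} [NeZero N] (β : ℝ) (X : ZMod N → ℂ) (j : ZMod N) : ℂ :=
  ((‖X (j + 1) - X j‖ ^ β : ℝ) : ℂ) * (X (j + 1) - X j)
    + ((‖X (j - 1) - X j‖ ^ β : ℝ) : ℂ) * (X (j - 1) - X j)

theorem stmt9 (N : ℕ) [NeZero N] (β : ℝ) (hβ : 0 < β) (k : ZMod N) (ω : ℂ)
    (hω : ω = Complex.exp (2 * Real.pi * Complex.I / N))
    (P : ZMod N → ℂ) (hP : P = fun j => ω ^ (j.val * k.val))
    (l : ℝ) (hl : l = ‖ω ^ k.val - 1‖)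
    (lam : ℝ) (hlam : lam = -4 * Real.sin (Real.pi * k.val / N) ^ 2)
    (a : ℝ → ℝ) (ha : a = fun t => (1 - β * l ^ β * lam * t) ^ (-1 / β)) :
    ∀ t : ℝ, 0 ≤ t → ∀ j,
      HasDerivAt (fun s => (a s : ℂ) * P j)
        (flowRHS β (fun m => (a t : ℂ) * P m) j) t := by
  intro t ht j
  have hN : (N : ℝ) ≠ 0 := Nat.cast_ne_zero.2 (NeZero.ne N)
  have hNC : (N : ℂ) ≠ 0 := Nat.cast_ne_zero.2 (NeZero.ne N)
  -- basic facts about ω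
  have hω' : ω = Complex.exp (((2 * Real.pi / N : ℝ) : ℂ) * Complex.I) := by
    rw [hω]; congr 1; push_cast; ring
  have hωabs : ‖ω‖ = 1 := by
    rw [hω']; exact Complex.norm_exp_ofReal_mul_I _
  have hωN : ω ^ N = 1 := by
    rw [hω, ← Complex.exp_nat_mul]
    rw [show (N : ℂ) * (2 * Real.pi * Complex.I / N) = 2 * Real.pi * Complex.I by
      field_simp]
    exact Complex.exp_two_pi_mul_I
  have key : ∀ m n : ℕ, m % N = n % N → ω ^ m = ω ^ n := by
    have h : ∀ m : ℕ, ω ^ m = ω ^ (m % N) := fun m => by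
      conv_lhs => rw [← Nat.div_add_mod m N]
      rw [pow_add, pow_mul, hωN, one_pow, one_mul]
    intro m n h'; rw [h m, h n, h']
  set q : ℂ := ω ^ k.val with hqdef
  have hq0 : q ≠ 0 := by
    rw [hqdef, hω]; exact pow_ne_zero _ (Complex.exp_ne_zero _)
  have hqabs : ‖q‖ = 1 := by
    rw [hqdef, norm_pow, hωabs, one_pow]
  -- step relation
  have hstep : ∀ m : ZMod N, P (m + 1) = P m * q := by
    intro m
    rw [hP]; simp only [hqdef]
    rw [← pow_add]
    apply key
    have h1 : (m + 1).val ≡ m.val + 1 [MOD N] := by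
      rw [ZMod.val_add, ZMod.val_one_eq_one_mod]
      exact (Nat.mod_modEq _ _).trans ((Nat.ModEq.refl m.val).add (Nat.mod_modEq 1 N))
    have := h1.mul_right k.val
    simpa [add_mul, one_mul, Nat.ModEq] using this
  have hPj1 : P (j + 1) = P j * q := hstep j
  have hPjm : P (j - 1) * q = P j := by
    have := hstep (j - 1); rw [sub_add_cancel] at this; exact this.symm
  have hPjm' : P (j - 1) = P j * q⁻¹ := by
    rw [← hPjm, mul_assoc, mul_inv_cancel₀ hq0, mul_one]
  have hPabs : ‖P j‖ = 1 := by
    rw [hP]; simp [norm_pow, hωabs]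
  -- positivity of a t
  have hlam_le : lam ≤ 0 := by
    rw [hlam]; nlinarith [sq_nonneg (Real.sin (Real.pi * k.val / N))]
  have hl0 : 0 ≤ l := by rw [hl]; positivity
  have hlβ : 0 ≤ l ^ β := Real.rpow_nonneg hl0 β
  have hu : 0 < 1 - β * l ^ β * lam * t := by
    have h0 : 0 ≤ β * l ^ β * -lam * t :=
      mul_nonneg (mul_nonneg (mul_nonneg hβ.le hlβ) (neg_nonneg.2 hlam_le)) ht
    nlinarith
  have hat : 0 < a t := by
    rw [ha]; exact Real.rpow_pos_of_pos hu _
  -- derivative of a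
  have hderiv : HasDerivAt a (l ^ β * lam * a t ^ (β + 1)) t := by
    have h1 : HasDerivAt (fun s : ℝ => 1 - β * l ^ β * lam * s)
        (-(β * l ^ β * lam)) t := by
      simpa using ((hasDerivAt_id t).const_mul (β * l ^ β * lam)).const_sub 1
    have h2 := h1.rpow_const (p := -1 / β) (Or.inl hu.ne')
    rw [ha]
    convert h2 using 1
    simp only
    rw [← Real.rpow_mul hu.le, show -1 / β * (β + 1) = -1 / β - 1 by
      field_simp; ring]
    field_simp
  have hD : HasDerivAt (fun s => (a s : ℂ) * P j)
      (((l ^ β * lam * a t ^ (β + 1) : ℝ) : ℂ) * P j) t :=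
    (hderiv.ofReal_comp).mul_const (P j)
  -- the eigenvalue identity
  have hq' : q = Complex.exp (((2 * Real.pi * k.val / N : ℝ) : ℂ) * Complex.I) := by
    rw [hqdef, hω', ← Complex.exp_nat_mul]; congr 1; push_cast; ring
  have hqinv : q⁻¹ = Complex.exp (((-(2 * Real.pi * k.val / N) : ℝ) : ℂ) * Complex.I) := by
    rw [hq', ← Complex.exp_neg]; congr 1; push_cast; ring
  have hsum : (q - 1) + (q⁻¹ - 1) = (lam : ℂ) := by
    have h2 : (q - 1) + (q⁻¹ - 1) = 2 * Complex.cos ((2 * Real.pi * k.val / N : ℝ) : ℂ) - 2 := by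
      rw [hqinv, hq']
      push_cast [Complex.exp_mul_I, Complex.cos_neg, Complex.sin_neg]
      ring
    rw [h2, ← Complex.ofReal_cos, hlam]
    have hc : Real.cos (2 * Real.pi * k.val / N)
        = 1 - 2 * Real.sin (Real.pi * k.val / N) ^ 2 := by
      have he : 2 * Real.pi * k.val / N = 2 * (Real.pi * k.val / N) := by ring
      rw [he, Real.cos_two_mul]
      nlinarith [Real.sin_sq_add_cos_sq (Real.pi * k.val / N)]
    rw [hc]
    push_cast
    ring
  -- computing flowRHS
  have e1 : (a t : ℂ) * P (j + 1) - (a t : ℂ) * P j = (a t : ℂ) * P j * (q - 1) := by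
    rw [hPj1]; ring
  have e2 : (a t : ℂ) * P (j - 1) - (a t : ℂ) * P j = (a t : ℂ) * P j * (q⁻¹ - 1) := by
    rw [hPjm']; ring
  have hn1 : ‖(a t : ℂ) * P j * (q - 1)‖ = a t * l := by
    rw [norm_mul, norm_mul, Complex.norm_real, Real.norm_eq_abs, abs_of_pos hat, hl]
    simp only [hPabs, one_mul, mul_one]
  have hn2 : ‖(a t : ℂ) * P j * (q⁻¹ - 1)‖ = a t * l := by
    have hq2 : q⁻¹ - 1 = q⁻¹ * (1 - q) := by field_simp
    rw [hq2, norm_mul, norm_mul, norm_mul, Complex.norm_real, Real.norm_eq_abs,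
      abs_of_pos hat, hl]
    have h1q : ‖(1 : ℂ) - q‖ = ‖q - 1‖ := by rw [← norm_neg]; congr 1; ring
    simp only [norm_inv, hPabs, one_mul, mul_one, map_inv₀, hqabs, inv_one, h1q]
  have hreal : (a t * l) ^ β * a t * lam = l ^ β * lam * a t ^ (β + 1) := by
    rw [Real.mul_rpow hat.le hl0, Real.rpow_add hat, Real.rpow_one]; ring
  have hRHS : flowRHS β (fun m => (a t : ℂ) * P m) j
      = ((l ^ β * lam * a t ^ (β + 1) : ℝ) : ℂ) * P j := by
    simp only [flowRHS, e1, e2, hn1, hn2]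
    have hre : (((a t * l) ^ β : ℝ) : ℂ) * ((a t : ℂ) * P j * (q - 1))
        + (((a t * l) ^ β : ℝ) : ℂ) * ((a t : ℂ) * P j * (q⁻¹ - 1))
        = (((a t * l) ^ β : ℝ) : ℂ) * (a t : ℂ) * ((q - 1) + (q⁻¹ - 1)) * P j := by
      ring
    rw [hre, hsum, ← hreal]
    push_cast
    ring
  rw [hRHS]; exact hD
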